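/- The algebra automorphisms of A2 are exactly the linear maps φ of the form φ(e1) = e1, φ(e2) = α²e2, φ(e3) = βe2 + αe3, where α ∈ ℂ \ {0} and β ∈ ℂ. -/

import Mathlib

set_option linter.unreachableTactic false
set_option linter.unnecessarySeqFocus false
set_option linter.unusedTactic false

noncomputable section

/-- The underlying space of our 3-dimensional algebras. -/
abbrev V3 : Type := Fin 3 → ℂ
/-- Multiplication of `A2`: unit `e1`, and `e3 * e3 = e2` is the only nonzero
product among `e2, e3`. -/
def A2mul : V3 →ₗ[ℂ] V3 →ₗ[ℂ] V3 :=
  LinearMap.mk₂ ℂ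
    (fun x y => ![x 0 * y 0, x 0 * y 1 + x 1 * y 0 + x 2 * y 2, x 0 * y 2 + x 2 * y 0])
    (fun x x' y => by funext k; fin_cases k <;> simp <;> ring)
    (fun a x y => by funext k; fin_cases k <;> simp <;> ring)
    (fun x y y' => by funext k; fin_cases k <;> simp <;> ring)
    (fun a x y => by funext k; fin_cases k <;> simp <;> ring)
/-- The basis vector `e1` (the unit). -/
def e1 : V3 := ![1, 0, 0]
/-- The basis vector `e2`. -/
def e2 : V3 := ![0, 1, 0]
/-- The basis vector `e3`. -/
def e3 : V3 := ![0, 0, 1]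

lemma A2mul_apply (x y : V3) :
    A2mul x y = ![x 0 * y 0, x 0 * y 1 + x 1 * y 0 + x 2 * y 2, x 0 * y 2 + x 2 * y 0] := rfl

lemma decomp (x : V3) : x = x 0 • e1 + x 1 • e2 + x 2 • e3 := by
  funext k; fin_cases k <;> simp [e1, e2, e3]

/-- **Theorem.** The algebra automorphisms of `A2` are exactly the linear maps
`φ` with `φ e1 = e1`, `φ e2 = α² e2`, `φ e3 = β • e2 + α • e3` for `α ∈ ℂ \ {0}`,
`β ∈ ℂ`. -/
theorem automorphisms_of_A2 (φ : V3 ≃ₗ[ℂ] V3) :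
    (∀ x y, φ (A2mul x y) = A2mul (φ x) (φ y)) ↔
      ∃ α β : ℂ, α ≠ 0 ∧ φ e1 = e1 ∧ φ e2 = α ^ 2 • e2 ∧ φ e3 = β • e2 + α • e3 := by
  constructor
  · intro h
    -- φ e1 = e1
    have hunit : ∀ z : V3, A2mul e1 z = z := by
      intro z; funext k; fin_cases k <;> simp [A2mul_apply, e1]
    have hrunit : ∀ z : V3, A2mul z e1 = z := by
      intro z; funext k; fin_cases k <;> simp [A2mul_apply, e1]
    have he1 : φ e1 = e1 := by
      have h1 := h e1 (φ.symm e1)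
      rw [hunit, φ.apply_symm_apply, hrunit] at h1
      exact h1.symm
    -- φ e2 = (φ e3)^2
    have he23 : φ e2 = A2mul (φ e3) (φ e3) := by
      have := h e3 e3
      have h33 : A2mul e3 e3 = e2 := by funext k; fin_cases k <;> simp [A2mul_apply, e2, e3]
      rwa [h33] at this
    set a := φ e3 0 with ha
    set b := φ e3 1 with hb
    set c := φ e3 2 with hc
    -- φ e2 * φ e2 = 0
    have h22 : A2mul (φ e2) (φ e2) = 0 := by
      have := h e2 e2
      have h220 : A2mul e2 e2 = 0 := by funext k; fin_cases k <;> simp [A2mul_apply, e2]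
      rw [h220, map_zero] at this
      exact this.symm
    have hv0 : φ e2 0 = a * a := by rw [he23, A2mul_apply]; simp; rfl
    have ha0 : a = 0 := by
      have := congrFun h22 0
      rw [A2mul_apply] at this
      simp [hv0] at this
      exact this
    have hc0 : c ≠ 0 := by
      intro hc'
      have he2z : φ e2 = 0 := by
        rw [he23]
        funext k; fin_cases k <;> simp [A2mul_apply, ← ha, ← hb, ← hc, ha0, hc']
      have : e2 = (0 : V3) := by
        have := φ.injective (by rw [he2z, map_zero] : φ e2 = φ 0)
        exact this
      have := congrFun this 1
      simp [e2] at this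
    refine ⟨c, b, hc0, he1, ?_, ?_⟩
    · rw [he23]; funext k
      fin_cases k <;> simp [A2mul_apply, ← ha, ← hb, ← hc, ha0, e2] <;> ring
    · have hw : φ e3 = ![a, b, c] := by
        funext k; fin_cases k <;> simp [← ha, ← hb, ← hc]
      rw [hw]; funext k; fin_cases k <;> simp [e2, e3, ha0]
  · rintro ⟨α, β, hα, h1, h2, h3⟩
    have hφ : ∀ x : V3, φ x = ![x 0, α ^ 2 * x 1 + β * x 2, α * x 2] := by
      intro x
      rw [decomp x, map_add, map_add, map_smul, map_smul, map_smul, h1, h2, h3]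
      funext k; fin_cases k <;> simp [e1, e2, e3] <;> ring
    intro x y
    rw [hφ, hφ, hφ, A2mul_apply, A2mul_apply]
    funext k; fin_cases k <;> simp <;> ring
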